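/- Let E be an almost σ-order complete Archimedean vector lattice. Then its sequential monotone closure E^{σm} = u(E) − u(E) (computed in an order completion of E) is σ-order complete. -/

import Mathlib

namespace Stmt16Aux

set_option linter.unusedSectionVars false

variable {α β : Type*}

section Maps

variable [Lattice α] [AddCommGroup α] [CovariantClass α α (· + ·) (· ≤ ·)]
variable [Lattice β] [AddCommGroup β] [CovariantClass β β (· + ·) (· ≤ ·)]

theorem adr {a b : α} (c : α) (h : a ≤ b) : a + c ≤ b + c := by
  rw [add_comm a c, add_comm b c]; exact add_le_add_right h c

theorem cancel_right {a b c : α} (h : a + c ≤ b + c) : a ≤ b := by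
  have h2 := adr (-c) h
  calc a = a + c + -c := by abel
    _ ≤ b + c + -c := h2
    _ = b := by abel

theorem map_zero' {f : α → β} (hadd : ∀ a b, f (a + b) = f a + f b) : f 0 = 0 := by
  have h : f 0 + f 0 = f 0 + 0 := by rw [← hadd, add_zero, add_zero]
  exact add_left_cancel (a := f 0) h

theorem map_sub' {f : α → β} (hadd : ∀ a b, f (a + b) = f a + f b) (a b : α) :
    f (a - b) = f a - f b := by
  have h := hadd (a - b) b
  rw [sub_add_cancel] at h
  rw [eq_sub_iff_add_eq, ← h]

theorem mono' {f : α → β} (hsup : ∀ a b, f (a ⊔ b) = f a ⊔ f b) {a b : α} (h : a ≤ b) :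
    f a ≤ f b := by
  have h2 : f a ⊔ f b = f b := by rw [← hsup, sup_eq_right.2 h]
  rw [← h2]; exact le_sup_left

theorem reflect' {f : α → β} (hinj : Function.Injective f)
    (hsup : ∀ a b, f (a ⊔ b) = f a ⊔ f b) {a b : α} (h : f a ≤ f b) : a ≤ b := by
  have h2 : f (a ⊔ b) = f b := by rw [hsup, sup_eq_right.2 h]
  exact sup_eq_right.1 (hinj h2)

theorem map_inf' {f : α → β} (hadd : ∀ a b, f (a + b) = f a + f b)
    (hsup : ∀ a b, f (a ⊔ b) = f a ⊔ f b) (a b : α) : f (a ⊓ b) = f a ⊓ f b := by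
  have h1 : a ⊓ b = a + b - (a ⊔ b) := (eq_sub_of_add_eq (inf_add_sup a b))
  have h2 : f a ⊓ f b = f a + f b - (f a ⊔ f b) := (eq_sub_of_add_eq (inf_add_sup (f a) (f b)))
  rw [h1, map_sub' hadd, hadd, hsup, h2]

end Maps

section LUB

variable [Lattice α] [AddCommGroup α] [CovariantClass α α (· + ·) (· ≤ ·)]

theorem isLUB_range_add_const {ι : Type*} {g : ι → α} {s : α}
    (h : IsLUB (Set.range g) s) (c : α) :
    IsLUB (Set.range fun n => g n + c) (s + c) := by
  constructor
  · rintro _ ⟨n, rfl⟩; exact adr c (h.1 ⟨n, rfl⟩)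
  · intro t ht
    have key : ∀ n, g n ≤ t + -c := by
      intro n
      have := adr (-c) (ht ⟨n, rfl⟩)
      calc g n = g n + c + -c := by abel
        _ ≤ t + -c := this
    have hst : s ≤ t + -c := h.2 (by rintro _ ⟨n, rfl⟩; exact key n)
    calc s + c ≤ t + -c + c := adr c hst
      _ = t := by abel

theorem isLUB_range_inf_const {ι : Type*} {g : ι → α} {s : α}
    (h : IsLUB (Set.range g) s) (c : α) :
    IsLUB (Set.range fun n => g n ⊓ c) (s ⊓ c) := by
  constructor
  · rintro _ ⟨n, rfl⟩; exact inf_le_inf_right c (h.1 ⟨n, rfl⟩)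
  · intro t ht
    have key : ∀ n, g n ≤ t + (s - s ⊓ c) := by
      intro n
      have h1 : g n ≤ s := h.1 ⟨n, rfl⟩
      have h2 : s ⊓ c + g n - s ≤ g n ⊓ c := by
        refine le_inf ?_ ?_
        · calc s ⊓ c + g n - s = s ⊓ c + (g n - s) := by abel
            _ ≤ s + (g n - s) := adr _ inf_le_left
            _ = g n := by abel
        · have h3 : s ⊓ c + g n ≤ c + s := by
            calc s ⊓ c + g n ≤ c + g n := adr _ inf_le_right
              _ = g n + c := by abel
              _ ≤ s + c := adr _ h1
              _ = c + s := by abel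
          calc s ⊓ c + g n - s = s ⊓ c + g n + -s := by abel
            _ ≤ c + s + -s := adr _ h3
            _ = c := by abel
      have h3 : s ⊓ c + g n - s ≤ t := h2.trans (ht ⟨n, rfl⟩)
      calc g n = (s ⊓ c + g n - s) + (s - s ⊓ c) := by abel
        _ ≤ t + (s - s ⊓ c) := adr _ h3
    have hst : s ≤ t + (s - s ⊓ c) := h.2 (by rintro _ ⟨n, rfl⟩; exact key n)
    have h4 : s ⊓ c + s ≤ t + s := by
      calc s ⊓ c + s ≤ s ⊓ c + (t + (s - s ⊓ c)) := add_le_add_right hst _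
        _ = t + s := by abel
    exact cancel_right h4

end LUB

/-- The key transfer lemma: if the same sequence from `E` has least upper bounds `s` and `t`
in two ambient lattice groups `F` and `G`, and `E` is order dense in `F`, then any `w : E`
dominated (in `G`) by `t` is dominated (in `F`) by `s`. -/
theorem transfer {E F G : Type*}
    [Lattice E] [AddCommGroup E] [CovariantClass E E (· + ·) (· ≤ ·)]
    [Lattice F] [AddCommGroup F] [CovariantClass F F (· + ·) (· ≤ ·)]
    [Lattice G] [AddCommGroup G] [CovariantClass G G (· + ·) (· ≤ ·)]
    (iF : E → F) (iG : E → G)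
    (hFinj : Function.Injective iF)
    (hFadd : ∀ a b, iF (a + b) = iF a + iF b)
    (hFsup : ∀ a b, iF (a ⊔ b) = iF a ⊔ iF b)
    (hGinj : Function.Injective iG)
    (hGadd : ∀ a b, iG (a + b) = iG a + iG b)
    (hGsup : ∀ a b, iG (a ⊔ b) = iG a ⊔ iG b)
    (hFdense : ∀ z : F, 0 < z → ∃ a : E, 0 < iF a ∧ iF a ≤ z)
    (c : ℕ → E) (w : E) (s : F) (t : G)
    (hs : IsLUB (Set.range fun n => iF (c n)) s)
    (ht : IsLUB (Set.range fun n => iG (c n)) t)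
    (hw : iG w ≤ t) : iF w ≤ s := by
  by_contra hcon
  have hz0 : 0 ≤ iF w - iF w ⊓ s := by
    have : iF w ⊓ s ≤ iF w := inf_le_left
    calc (0 : F) = iF w ⊓ s + -(iF w ⊓ s) := by abel
      _ ≤ iF w + -(iF w ⊓ s) := adr _ this
      _ = iF w - iF w ⊓ s := by abel
  have hzne : iF w - iF w ⊓ s ≠ 0 := by
    intro h
    apply hcon
    have h2 : iF w = iF w ⊓ s := by
      have := sub_eq_zero.1 h
      exact this
    rw [h2]; exact inf_le_right
  obtain ⟨a, ha0, haz⟩ := hFdense _ (lt_of_le_of_ne hz0 (Ne.symm hzne))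
  have h1 : iF w ⊓ s ≤ iF (w - a) := by
    rw [map_sub' hFadd]
    calc iF w ⊓ s = iF a + (iF w ⊓ s) + -(iF a) := by abel
      _ ≤ (iF w - iF w ⊓ s) + (iF w ⊓ s) + -(iF a) := by
          refine adr _ (adr _ haz)
      _ = iF w - iF a := by abel
  have h2 : ∀ n, c n ⊓ w ≤ w - a := by
    intro n
    apply reflect' hFinj hFsup
    rw [map_inf' hFadd hFsup]
    calc iF (c n) ⊓ iF w ≤ s ⊓ iF w := inf_le_inf_right _ (hs.1 ⟨n, rfl⟩)
      _ = iF w ⊓ s := inf_comm _ _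
      _ ≤ iF (w - a) := h1
  have h3 : ∀ n, iG (c n) ⊓ iG w ≤ iG (w - a) := by
    intro n
    rw [← map_inf' hGadd hGsup]
    exact mono' hGsup (h2 n)
  have h4 : t ⊓ iG w ≤ iG (w - a) := by
    have hlub := isLUB_range_inf_const ht (iG w)
    refine hlub.2 ?_
    rintro _ ⟨n, rfl⟩; exact h3 n
  have h5 : iG w ≤ iG (w - a) := by
    rw [inf_eq_right.2 hw] at h4
    exact h4
  have h6 : w ≤ w - a := reflect' hGinj hGsup h5
  have h7 : a ≤ 0 := by
    have h6' : w + a ≤ w := by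
      calc w + a ≤ (w - a) + a := adr _ h6
        _ = w := by abel
    refine cancel_right (c := w) ?_
    calc a + w = w + a := by abel
      _ ≤ w := h6'
      _ = 0 + w := by abel
  have h12 : iF a ≤ iF 0 := mono' hFsup h7
  rw [map_zero' hFadd] at h12
  exact absurd ha0 (not_lt_of_ge h12)

/-- iterated binary sups of a sequence -/
def iterSup [Lattice α] (f : ℕ → α) : ℕ → α
  | 0 => f 0
  | n + 1 => iterSup f n ⊔ f (n + 1)

theorem iterSup_mono [Lattice α] (f : ℕ → α) : Monotone (iterSup f) :=
  monotone_nat_of_le_succ (fun n => le_sup_left)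

theorem le_iterSup [Lattice α] (f : ℕ → α) (n : ℕ) : f n ≤ iterSup f n := by
  cases n with
  | zero => exact le_refl _
  | succ n => exact le_sup_right

theorem iterSup_le [Lattice α] (f : ℕ → α) {t : α} (h : ∀ n, f n ≤ t) (n : ℕ) :
    iterSup f n ≤ t := by
  induction n with
  | zero => exact h 0
  | succ n ih => exact sup_le ih (h (n + 1))

theorem isLUB_iterSup [Lattice α] (f : ℕ → α) {s : α} :
    IsLUB (Set.range f) s ↔ IsLUB (Set.range (iterSup f)) s := by
  have hub : upperBounds (Set.range f) = upperBounds (Set.range (iterSup f)) := by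
    ext t
    constructor
    · intro ht
      rintro _ ⟨n, rfl⟩
      exact iterSup_le f (fun m => ht ⟨m, rfl⟩) n
    · intro ht
      rintro _ ⟨n, rfl⟩
      exact (le_iterSup f n).trans (ht ⟨n, rfl⟩)
  constructor
  · intro h
    exact ⟨hub ▸ h.1, fun t ht => h.2 (hub ▸ ht)⟩
  · intro h
    exact ⟨hub.symm ▸ h.1, fun t ht => h.2 (hub.symm ▸ ht)⟩

/-- the diagonal sequence for a double sequence, covering all pairs -/
def diagSeq [Lattice α] (u : ℕ → ℕ → α) : ℕ → α
  | 0 => u 0 0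
  | n + 1 => diagSeq u n ⊔ u (Nat.unpair n).1 (Nat.unpair n).2

theorem diagSeq_mono [Lattice α] (u : ℕ → ℕ → α) : Monotone (diagSeq u) :=
  monotone_nat_of_le_succ (fun n => le_sup_left)

theorem le_diagSeq [Lattice α] (u : ℕ → ℕ → α) (k m : ℕ) :
    u k m ≤ diagSeq u (Nat.pair k m + 1) := by
  have : (Nat.unpair (Nat.pair k m)).1 = k ∧ (Nat.unpair (Nat.pair k m)).2 = m := by
    rw [Nat.unpair_pair]; exact ⟨rfl, rfl⟩
  show u k m ≤ diagSeq u (Nat.pair k m) ⊔ u (Nat.unpair (Nat.pair k m)).1 (Nat.unpair (Nat.pair k m)).2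
  rw [this.1, this.2]
  exact le_sup_right


section LUB2

theorem add_le_add' {α : Type*} [Lattice α] [AddCommGroup α]
    [CovariantClass α α (· + ·) (· ≤ ·)] {a b c d : α} (h1 : a ≤ b) (h2 : c ≤ d) :
    a + c ≤ b + d :=
  (adr c h1).trans (add_le_add_right h2 b)

theorem swap_sub {α : Type*} [Lattice α] [AddCommGroup α]
    [CovariantClass α α (· + ·) (· ≤ ·)] {a b c : α} (h : a ≤ b - c) : c ≤ b - a := by
  calc c = a + (c - a) := by abel
    _ ≤ (b - c) + (c - a) := adr _ h
    _ = b - a := by abel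

variable {E F : Type*}
  [Lattice E] [AddCommGroup E] [CovariantClass E E (· + ·) (· ≤ ·)]
  [Lattice F] [AddCommGroup F] [CovariantClass F F (· + ·) (· ≤ ·)]

theorem lub_add (i : E → F) (hiadd : ∀ a b, i (a + b) = i a + i b)
    {u v : ℕ → E} {x y : F}
    (hu : Monotone fun n => i (u n)) (hv : Monotone fun n => i (v n))
    (hx : IsLUB (Set.range fun n => i (u n)) x) (hy : IsLUB (Set.range fun n => i (v n)) y) :
    Monotone (fun n => i (u n + v n)) ∧ IsLUB (Set.range fun n => i (u n + v n)) (x + y) := by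
  refine ⟨?_, ?_, ?_⟩
  · intro n m h
    dsimp only
    rw [hiadd, hiadd]
    exact add_le_add' (hu h) (hv h)
  · rintro _ ⟨n, rfl⟩
    show i (u n + v n) ≤ x + y
    rw [hiadd]
    exact add_le_add' (hx.1 ⟨n, rfl⟩) (hy.1 ⟨n, rfl⟩)
  · intro t ht
    have key : ∀ n m, i (u n) + i (v m) ≤ t := by
      intro n m
      have h1 : i (u n) ≤ i (u (max n m)) := hu (le_max_left n m)
      have h2 : i (v m) ≤ i (v (max n m)) := hv (le_max_right n m)
      have h3 : i (u (max n m) + v (max n m)) ≤ t := ht ⟨max n m, rfl⟩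
      rw [hiadd] at h3
      exact (add_le_add' h1 h2).trans h3
    have h4 : ∀ m, i (v m) ≤ t + -x := by
      intro m
      have h5 : x ≤ t + -(i (v m)) := by
        refine hx.2 ?_
        rintro _ ⟨n, rfl⟩
        have h6 := key n m
        calc i (u n) = (i (u n) + i (v m)) + -(i (v m)) := by abel
          _ ≤ t + -(i (v m)) := adr _ h6
      calc i (v m) = x + i (v m) + -x := by abel
        _ ≤ (t + -(i (v m))) + i (v m) + -x := adr _ (adr _ h5)
        _ = t + -x := by abel
    have h6 : y ≤ t + -x := hy.2 (by rintro _ ⟨m, rfl⟩; exact h4 m)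
    calc x + y ≤ x + (t + -x) := add_le_add_right h6 x
      _ = t := by abel

theorem lub_sup (i : E → F) (hisup : ∀ a b, i (a ⊔ b) = i a ⊔ i b)
    {u v : ℕ → E} {x y : F}
    (hu : Monotone fun n => i (u n)) (hv : Monotone fun n => i (v n))
    (hx : IsLUB (Set.range fun n => i (u n)) x) (hy : IsLUB (Set.range fun n => i (v n)) y) :
    Monotone (fun n => i (u n ⊔ v n)) ∧ IsLUB (Set.range fun n => i (u n ⊔ v n)) (x ⊔ y) := by
  refine ⟨?_, ?_, ?_⟩
  · intro n m h
    dsimp only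
    rw [hisup, hisup]
    exact sup_le_sup (hu h) (hv h)
  · rintro _ ⟨n, rfl⟩
    show i (u n ⊔ v n) ≤ x ⊔ y
    rw [hisup]
    exact sup_le_sup (hx.1 ⟨n, rfl⟩) (hy.1 ⟨n, rfl⟩)
  · intro t ht
    have h1 : ∀ n, i (u n) ≤ t := by
      intro n
      have h2 : i (u n ⊔ v n) ≤ t := ht ⟨n, rfl⟩
      rw [hisup] at h2
      exact le_sup_left.trans h2
    have h2 : ∀ n, i (v n) ≤ t := by
      intro n
      have h3 : i (u n ⊔ v n) ≤ t := ht ⟨n, rfl⟩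
      rw [hisup] at h3
      exact le_sup_right.trans h3
    exact sup_le (hx.2 (by rintro _ ⟨n, rfl⟩; exact h1 n))
      (hy.2 (by rintro _ ⟨n, rfl⟩; exact h2 n))

theorem lub_diag (i : E → F) (hisup : ∀ a b, i (a ⊔ b) = i a ⊔ i b)
    (x : ℕ → F) (u : ℕ → ℕ → E)
    (hux : ∀ k, IsLUB (Set.range fun n => i (u k n)) (x k))
    {s : F} (hs : IsLUB (Set.range x) s) :
    Monotone (fun n => i (diagSeq u n)) ∧ IsLUB (Set.range fun n => i (diagSeq u n)) s := by
  have hmono : Monotone fun n => i (diagSeq u n) := fun n m h => mono' hisup (diagSeq_mono u h)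
  refine ⟨hmono, ?_, ?_⟩
  · rintro _ ⟨n, rfl⟩
    show i (diagSeq u n) ≤ s
    induction n with
    | zero =>
      show i (u 0 0) ≤ s
      exact ((hux 0).1 ⟨0, rfl⟩).trans (hs.1 ⟨0, rfl⟩)
    | succ n ih =>
      show i (diagSeq u n ⊔ u (Nat.unpair n).1 (Nat.unpair n).2) ≤ s
      rw [hisup]
      exact sup_le ih (((hux _).1 ⟨_, rfl⟩).trans (hs.1 ⟨_, rfl⟩))
  · intro t ht
    refine hs.2 ?_
    rintro _ ⟨k, rfl⟩
    refine (hux k).2 ?_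
    rintro _ ⟨m, rfl⟩
    exact (mono' hisup (le_diagSeq u k m)).trans (ht ⟨_, rfl⟩)

end LUB2

section KeySub

variable {E Eδ X : Type*}
  [Lattice E] [AddCommGroup E] [CovariantClass E E (· + ·) (· ≤ ·)]
  [Lattice Eδ] [AddCommGroup Eδ] [CovariantClass Eδ Eδ (· + ·) (· ≤ ·)]
  [Lattice X] [AddCommGroup X] [CovariantClass X X (· + ·) (· ≤ ·)]

/-- The key lemma: in the order completion of an almost σ-order complete vector lattice,
the set u(E) of σ-upper elements is closed under differences that are positive,
i.e. if q ≤ p are both σ-upper then p - q is σ-upper. -/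
theorem key_sub (i : E → Eδ)
    (hiinj : Function.Injective i)
    (hiadd : ∀ a b : E, i (a + b) = i a + i b)
    (hisup : ∀ a b : E, i (a ⊔ b) = i a ⊔ i b)
    (hdense : ∀ x : Eδ, 0 < x → ∃ a : E, 0 < i a ∧ i a ≤ x)
    (hmaj : ∀ x : Eδ, ∃ a : E, x ≤ i a)
    (j : E → X)
    (hjinj : Function.Injective j)
    (hjadd : ∀ a b : E, j (a + b) = j a + j b)
    (hjsup : ∀ a b : E, j (a ⊔ b) = j a ⊔ j b)
    (hXc : ∀ C : Set X, C.Countable → C.Nonempty → BddAbove C → ∃ s, IsLUB C s)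
    (hsuper : ∀ x : X, 0 ≤ x → ∃ u : ℕ → E, (∀ n, 0 ≤ u n) ∧ Monotone (fun n => j (u n)) ∧
      IsLUB (Set.range fun n => j (u n)) x)
    {u v : ℕ → E} {p q : Eδ}
    (hu : Monotone fun n => i (u n)) (hv : Monotone fun n => i (v n))
    (hp : IsLUB (Set.range fun n => i (u n)) p) (hq : IsLUB (Set.range fun n => i (v n)) q)
    (hqp : q ≤ p) :
    ∃ w : ℕ → E, Monotone (fun n => i (w n)) ∧ IsLUB (Set.range fun n => i (w n)) (p - q) := by
  have hvq : ∀ m, i (v m) ≤ q := fun m => hq.1 ⟨m, rfl⟩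
  -- the double sequence (u n - v m)⁺ and its sups in Eδ
  have hPm : ∀ m, IsLUB (Set.range fun n => i ((u n - v m) ⊔ 0)) (p - i (v m)) := by
    intro m
    have h0 : (0 : Eδ) ≤ p - i (v m) := by
      have h1 : i (v m) ≤ p := (hvq m).trans hqp
      calc (0 : Eδ) = i (v m) + -(i (v m)) := by abel
        _ ≤ p + -(i (v m)) := adr _ h1
        _ = p - i (v m) := by abel
    constructor
    · rintro _ ⟨n, rfl⟩
      show i ((u n - v m) ⊔ 0) ≤ p - i (v m)
      rw [hisup, map_sub' hiadd, map_zero' hiadd]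
      refine sup_le ?_ h0
      calc i (u n) - i (v m) = i (u n) + -(i (v m)) := by abel
        _ ≤ p + -(i (v m)) := adr _ (hp.1 ⟨n, rfl⟩)
        _ = p - i (v m) := by abel
    · intro t ht
      have key : ∀ n, i (u n) ≤ t + i (v m) := by
        intro n
        have h1 : i ((u n - v m) ⊔ 0) ≤ t := ht ⟨n, rfl⟩
        rw [hisup, map_sub' hiadd, map_zero' hiadd] at h1
        have h2 : i (u n) - i (v m) ≤ t := le_sup_left.trans h1
        calc i (u n) = (i (u n) - i (v m)) + i (v m) := by abel
          _ ≤ t + i (v m) := adr _ h2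
      have h3 : p ≤ t + i (v m) := hp.2 (by rintro _ ⟨n, rfl⟩; exact key n)
      calc p - i (v m) = p + -(i (v m)) := by abel
        _ ≤ (t + i (v m)) + -(i (v m)) := adr _ h3
        _ = t := by abel
  -- the corresponding sups in X
  obtain ⟨e', he'⟩ := hmaj p
  have hue' : ∀ n, u n ≤ e' := fun n => reflect' hiinj hisup ((hp.1 ⟨n, rfl⟩).trans he')
  have hbddX : ∀ m, BddAbove (Set.range fun n => j ((u n - v m) ⊔ 0)) := by
    intro m
    refine ⟨j ((e' - v m) ⊔ 0), ?_⟩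
    rintro _ ⟨n, rfl⟩
    show j ((u n - v m) ⊔ 0) ≤ j ((e' - v m) ⊔ 0)
    apply mono' hjsup
    refine sup_le ?_ le_sup_right
    refine le_trans ?_ le_sup_left
    calc u n - v m = u n + -(v m) := by abel
      _ ≤ e' + -(v m) := adr _ (hue' n)
      _ = e' - v m := by abel
  have hxm : ∀ m, ∃ xm, IsLUB (Set.range fun n => j ((u n - v m) ⊔ 0)) xm :=
    fun m => hXc _ (Set.countable_range _) (Set.range_nonempty _) (hbddX m)
  choose x hx using hxm
  have hx0 : ∀ m, (0 : X) ≤ x m := by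
    intro m
    refine le_trans ?_ ((hx m).1 ⟨0, rfl⟩)
    have h1 : (0 : E) ≤ (u 0 - v m) ⊔ 0 := le_sup_right
    have h2 := mono' hjsup h1
    rwa [map_zero' hjadd] at h2
  -- the infimum y = x 0 - r of the x m
  obtain ⟨r, hr⟩ := hXc (Set.range fun m => x 0 - x m) (Set.countable_range _)
    (Set.range_nonempty _) ⟨x 0, by
      rintro _ ⟨m, rfl⟩
      calc x 0 - x m = (x 0 - x m) + 0 := by abel
        _ ≤ (x 0 - x m) + x m := add_le_add_right (hx0 m) _
        _ = x 0 := by abel⟩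
  have hylb : ∀ m, x 0 - r ≤ x m := by
    intro m
    have h1 : x 0 - x m ≤ r := hr.1 ⟨m, rfl⟩
    calc x 0 - r = (x 0 - x m) + (x m - r) := by abel
      _ ≤ r + (x m - r) := adr _ h1
      _ = x m := by abel
  have hyglb : ∀ t : X, (∀ m, t ≤ x m) → t ≤ x 0 - r := by
    intro t htm
    have h1 : r ≤ x 0 - t := by
      refine hr.2 ?_
      rintro _ ⟨m, rfl⟩
      have h2 : t - x m ≤ 0 := by
        calc t - x m = t + -(x m) := by abel
          _ ≤ x m + -(x m) := adr _ (htm m)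
          _ = 0 := by abel
      calc x 0 - x m = (x 0 - t) + (t - x m) := by abel
        _ ≤ (x 0 - t) + 0 := add_le_add_right h2 _
        _ = x 0 - t := by abel
    have h3 : r - (x 0 - t) ≤ 0 := by
      calc r - (x 0 - t) = r + -(x 0 - t) := by abel
        _ ≤ (x 0 - t) + -(x 0 - t) := adr _ h1
        _ = 0 := by abel
    calc t = (x 0 - r) + (r - (x 0 - t)) := by abel
      _ ≤ (x 0 - r) + 0 := add_le_add_right h3 _
      _ = x 0 - r := by abel
  have hy0 : (0 : X) ≤ x 0 - r := hyglb 0 hx0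
  obtain ⟨w, hw0, hwmono, hwy⟩ := hsuper (x 0 - r) hy0
  -- density of j E in X
  have hjdense : ∀ z : X, 0 < z → ∃ a : E, 0 < j a ∧ j a ≤ z := by
    intro z hz
    obtain ⟨u', hu'0, hu'mono, hu'lub⟩ := hsuper z hz.le
    by_cases hall : ∀ n, j (u' n) = 0
    · exfalso
      have h1 : z ≤ 0 := hu'lub.2 (by rintro _ ⟨n, rfl⟩; show j (u' n) ≤ 0; rw [hall n])
      exact absurd hz (not_lt_of_ge h1)
    · push_neg at hall
      obtain ⟨n, hn⟩ := hall
      refine ⟨u' n, ?_, hu'lub.1 ⟨n, rfl⟩⟩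
      have h0 : (0 : X) ≤ j (u' n) := by
        have h1 := mono' hjsup (hu'0 n)
        rwa [map_zero' hjadd] at h1
      exact lt_of_le_of_ne h0 (Ne.symm hn)
  -- upper bound part
  have hwle : ∀ k, i (w k) ≤ p - q := by
    intro k
    have h1 : ∀ m, i (w k) ≤ p - i (v m) := by
      intro m
      refine transfer i j hiinj hiadd hisup hjinj hjadd hjsup hdense
        (fun n => (u n - v m) ⊔ 0) (w k) _ _ (hPm m) (hx m) ?_
      exact (hwy.1 ⟨k, rfl⟩).trans (hylb m)
    have h2 : ∀ m, i (v m) ≤ p - i (w k) := fun m => swap_sub (h1 m)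
    have h3 : q ≤ p - i (w k) := hq.2 (by rintro _ ⟨m, rfl⟩; exact h2 m)
    exact swap_sub h3
  have hwm : Monotone fun n => i (w n) := by
    intro n m h
    exact mono' hisup (reflect' hjinj hjsup (hwmono h))
  refine ⟨w, hwm, ?_, ?_⟩
  · rintro _ ⟨k, rfl⟩; exact hwle k
  · intro t ht
    by_cases hzz : p - q - (p - q) ⊓ t = 0
    · have h1 : p - q = (p - q) ⊓ t := by
        have h2 := sub_eq_zero.1 hzz
        exact h2
      calc p - q = (p - q) ⊓ t := h1
        _ ≤ t := inf_le_right
    · have hz0 : (0 : Eδ) ≤ p - q - (p - q) ⊓ t := by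
        have h1 : (p - q) ⊓ t ≤ p - q := inf_le_left
        calc (0 : Eδ) = (p - q) ⊓ t + -((p - q) ⊓ t) := by abel
          _ ≤ (p - q) + -((p - q) ⊓ t) := adr _ h1
          _ = p - q - (p - q) ⊓ t := by abel
      obtain ⟨a, ha0, haz⟩ := hdense _ (lt_of_le_of_ne hz0 (Ne.symm hzz))
      exfalso
      have h7 : ∀ k, i (w k) + i a ≤ p - q := by
        intro k
        have h8 : i (w k) ≤ (p - q) ⊓ t := le_inf (hwle k) (ht ⟨k, rfl⟩)
        calc i (w k) + i a ≤ ((p - q) ⊓ t) + i a := adr _ h8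
          _ ≤ ((p - q) ⊓ t) + (p - q - (p - q) ⊓ t) := add_le_add_right haz _
          _ = p - q := by abel
      have h8 : ∀ k m, i (w k + a) ≤ p - i (v m) := by
        intro k m
        rw [hiadd]
        refine (h7 k).trans ?_
        have hvm0 : i (v m) - q ≤ 0 := by
          calc i (v m) - q = i (v m) + -q := by abel
            _ ≤ q + -q := adr _ (hvq m)
            _ = 0 := by abel
        calc p - q = (p - i (v m)) + (i (v m) - q) := by abel
          _ ≤ (p - i (v m)) + 0 := add_le_add_right hvm0 _
          _ = p - i (v m) := by abel
      have h9 : ∀ k m, j (w k + a) ≤ x m := by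
        intro k m
        exact transfer j i hjinj hjadd hjsup hiinj hiadd hisup hjdense
          (fun n => (u n - v m) ⊔ 0) (w k + a) _ _ (hx m) (hPm m) (h8 k m)
      have h10 : ∀ k, j (w k) + j a ≤ x 0 - r := by
        intro k
        have h11 := hyglb (j (w k + a)) (h9 k)
        rwa [hjadd] at h11
      have h11 : x 0 - r ≤ (x 0 - r) - j a := by
        refine hwy.2 ?_
        rintro _ ⟨k, rfl⟩
        have h12 := h10 k
        calc j (w k) = (j (w k) + j a) + -(j a) := by abel
          _ ≤ (x 0 - r) + -(j a) := adr _ h12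
          _ = (x 0 - r) - j a := by abel
      have h12 : j a ≤ 0 := by
        calc j a = (x 0 - r) + (j a - (x 0 - r)) := by abel
          _ ≤ ((x 0 - r) - j a) + (j a - (x 0 - r)) := adr _ h11
          _ = 0 := by abel
      have h14 : a ≤ 0 := by
        refine reflect' hjinj hjsup ?_
        rw [map_zero' hjadd]; exact h12
      have h15 : i a ≤ 0 := by
        have h16 := mono' hisup h14
        rwa [map_zero' hiadd] at h16
      exact absurd ha0 (not_lt_of_ge h15)

end KeySub

end Stmt16Aux

open Stmt16Aux in
/-- Let E be an almost σ-order complete Archimedean vector lattice. Then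
its sequential monotone closure E^{σm} = u(E) − u(E), computed in an order completion
E^δ of E, is σ-order complete. -/
theorem stmt16 {E Eδ : Type*}
    [Lattice E] [AddCommGroup E] [Module ℝ E] [CovariantClass E E (· + ·) (· ≤ ·)]
    [Lattice Eδ] [AddCommGroup Eδ] [Module ℝ Eδ] [CovariantClass Eδ Eδ (· + ·) (· ≤ ·)]
    -- E is Archimedean
    (harch : ∀ x y : E, (∀ n : ℕ, n • x ≤ y) → x ≤ 0)
    -- E is almost σ-order complete: it embeds as a super order dense sublattice of a
    -- σ-order complete vector lattice X
    (halmost : ∃ (X : Type) (_ : Lattice X) (_ : AddCommGroup X) (_ : Module ℝ X)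
        (_ : CovariantClass X X (· + ·) (· ≤ ·)) (j : E → X),
        Function.Injective j ∧
        (∀ a b : E, j (a + b) = j a + j b) ∧
        (∀ (c : ℝ) (a : E), j (c • a) = c • j a) ∧
        (∀ a b : E, j (a ⊔ b) = j a ⊔ j b) ∧
        -- X is σ-order complete
        (∀ C : Set X, C.Countable → C.Nonempty → BddAbove C → ∃ s, IsLUB C s) ∧
        -- j E is super order dense in X
        (∀ x : X, 0 ≤ x → ∃ u : ℕ → E, (∀ n, 0 ≤ u n) ∧ Monotone (fun n => j (u n)) ∧
          IsLUB (Set.range fun n => j (u n)) x))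
    -- i : E → Eδ realizes Eδ as an order completion of E
    (i : E → Eδ)
    (hiinj : Function.Injective i)
    (hiadd : ∀ a b : E, i (a + b) = i a + i b)
    (hism : ∀ (c : ℝ) (a : E), i (c • a) = c • i a)
    (hisup : ∀ a b : E, i (a ⊔ b) = i a ⊔ i b)
    (hcomp : ∀ C : Set Eδ, C.Nonempty → BddAbove C → ∃ b, IsLUB C b)
    (hdense : ∀ x : Eδ, 0 < x → ∃ a : E, 0 < i a ∧ i a ≤ x)
    (hmaj : ∀ x : Eδ, ∃ a : E, x ≤ i a)
    -- the sequential monotone closure S = u(E) − u(E) in Eδ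
    (uE S : Set Eδ)
    (huE : uE = {x : Eδ | ∃ u : ℕ → E, Monotone (fun n => i (u n)) ∧
      IsLUB (Set.range fun n => i (u n)) x})
    (hSdef : S = {x : Eδ | ∃ a ∈ uE, ∃ b ∈ uE, x = a - b}) :
    -- S is σ-order complete
    ∀ C : Set Eδ, C ⊆ S → C.Countable → C.Nonempty → (∃ b ∈ S, ∀ c ∈ C, c ≤ b) →
      ∃ s ∈ S, IsLUB C s := by
  intro C hCS hCcount hCne hCbdd
  obtain ⟨X, instL, instA, instM, instC, j, hjinj, hjadd, hjsm, hjsup, hXc, hsuper⟩ := halmost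
  letI := instL
  letI := instA
  letI := instM
  letI := instC
  -- membership unfoldings
  have hUmem : ∀ z : Eδ, z ∈ uE ↔ ∃ u : ℕ → E, Monotone (fun n => i (u n)) ∧
      IsLUB (Set.range fun n => i (u n)) z := by
    intro z; rw [huE]; exact Iff.rfl
  have hSmem : ∀ z : Eδ, z ∈ S ↔ ∃ a ∈ uE, ∃ b ∈ uE, z = a - b := by
    intro z; rw [hSdef]; exact Iff.rfl
  -- uE is closed under + and ⊔
  have hUadd : ∀ z1 ∈ uE, ∀ z2 ∈ uE, z1 + z2 ∈ uE := by
    intro z1 h1 z2 h2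
    obtain ⟨u, hu, hx⟩ := (hUmem z1).1 h1
    obtain ⟨v, hv, hy⟩ := (hUmem z2).1 h2
    obtain ⟨hm, hl⟩ := lub_add i hiadd hu hv hx hy
    exact (hUmem _).2 ⟨fun n => u n + v n, hm, hl⟩
  have hUsup : ∀ z1 ∈ uE, ∀ z2 ∈ uE, z1 ⊔ z2 ∈ uE := by
    intro z1 h1 z2 h2
    obtain ⟨u, hu, hx⟩ := (hUmem z1).1 h1
    obtain ⟨v, hv, hy⟩ := (hUmem z2).1 h2
    obtain ⟨hm, hl⟩ := lub_sup i hisup hu hv hx hy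
    exact (hUmem _).2 ⟨fun n => u n ⊔ v n, hm, hl⟩
  -- S is closed under ⊔
  have hSsup : ∀ z1 ∈ S, ∀ z2 ∈ S, z1 ⊔ z2 ∈ S := by
    intro z1 h1 z2 h2
    obtain ⟨a, ha, b, hb, rfl⟩ := (hSmem z1).1 h1
    obtain ⟨a', ha', b', hb', rfl⟩ := (hSmem z2).1 h2
    refine (hSmem _).2 ⟨(a + b') ⊔ (a' + b),
      hUsup _ (hUadd _ ha _ hb') _ (hUadd _ ha' _ hb), b + b', hUadd _ hb _ hb', ?_⟩
    have h3 : ((a - b) ⊔ (a' - b')) + (b + b') = (a + b') ⊔ (a' + b) := by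
      rw [sup_add]
      congr 1 <;> abel
    calc (a - b) ⊔ (a' - b')
        = (((a - b) ⊔ (a' - b')) + (b + b')) - (b + b') := by abel
      _ = ((a + b') ⊔ (a' + b)) - (b + b') := by rw [h3]
  -- uE differences with positive difference stay in uE (the key lemma)
  have hkey : ∀ z1 ∈ uE, ∀ z2 ∈ uE, z2 ≤ z1 → z1 - z2 ∈ uE := by
    intro z1 h1 z2 h2 hle
    obtain ⟨u, hu, hp⟩ := (hUmem z1).1 h1
    obtain ⟨v, hv, hq⟩ := (hUmem z2).1 h2
    obtain ⟨w, hw1, hw2⟩ := key_sub i hiinj hiadd hisup hdense hmaj j hjinj hjadd hjsup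
      hXc hsuper hu hv hp hq hle
    exact (hUmem _).2 ⟨w, hw1, hw2⟩
  -- positive differences of elements of S are in uE
  have hdiff : ∀ z ∈ S, ∀ z' ∈ S, z' ≤ z → z - z' ∈ uE := by
    intro z hz z' hz' hle
    obtain ⟨a, ha, b, hb, rfl⟩ := (hSmem z).1 hz
    obtain ⟨a', ha', b', hb', rfl⟩ := (hSmem z').1 hz'
    have h1 : b + a' ≤ a + b' := by
      calc b + a' = (a' - b') + (b + b') := by abel
        _ ≤ (a - b) + (b + b') := adr _ hle
        _ = a + b' := by abel
    have h2 := hkey _ (hUadd _ ha _ hb') _ (hUadd _ hb _ ha') h1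
    have h3 : (a - b) - (a' - b') = (a + b') - (b + a') := by abel
    rw [h3]; exact h2
  -- enumerate C and take the sup
  obtain ⟨f, hfC⟩ := Set.Countable.exists_eq_range hCcount hCne
  subst hfC
  obtain ⟨B, hBS, hBub⟩ := hCbdd
  obtain ⟨s, hslub⟩ := hcomp (Set.range f) (Set.range_nonempty f)
    ⟨B, fun c hc => hBub c hc⟩
  refine ⟨s, ?_, hslub⟩
  -- the increasing sequence of finite sups lies in S
  have heS : ∀ k, iterSup f k ∈ S := by
    intro k
    induction k with
    | zero => exact hCS ⟨0, rfl⟩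
    | succ k ih => exact hSsup _ ih _ (hCS ⟨k + 1, rfl⟩)
  have hes : IsLUB (Set.range (iterSup f)) s := (isLUB_iterSup f).1 hslub
  -- e k - e 0 lies in uE
  have hgU : ∀ k, iterSup f k - iterSup f 0 ∈ uE := by
    intro k
    exact hdiff _ (heS k) _ (heS 0) (iterSup_mono f (Nat.zero_le k))
  -- the LUB of the e k - e 0 is s - e 0
  have hglub : IsLUB (Set.range fun k => iterSup f k - iterSup f 0) (s - iterSup f 0) := by
    have h1 := isLUB_range_add_const hes (-(iterSup f 0))
    simpa [sub_eq_add_neg] using h1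
  -- by the diagonal argument, s - e 0 ∈ uE
  have hgU' : ∀ k, ∃ u : ℕ → E, Monotone (fun n => i (u n)) ∧
      IsLUB (Set.range fun n => i (u n)) (iterSup f k - iterSup f 0) :=
    fun k => (hUmem _).1 (hgU k)
  choose g hg1 hg2 using hgU'
  obtain ⟨hm, hl⟩ := lub_diag i hisup (fun k => iterSup f k - iterSup f 0) g hg2 hglub
  have hsU : s - iterSup f 0 ∈ uE := (hUmem _).2 ⟨diagSeq g, hm, hl⟩
  -- assemble: s = ((s - e 0) + a0) - b0
  obtain ⟨a0, ha0, b0, hb0, he0⟩ := (hSmem _).1 (heS 0)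
  refine (hSmem s).2 ⟨(s - iterSup f 0) + a0, hUadd _ hsU _ ha0, b0, hb0, ?_⟩
  rw [eq_sub_iff_add_eq, ← sub_eq_iff_eq_add]
  rw [he0]
  abel
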